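/- arXiv:1604.08152 — 2 statements merged into one kernel-verified Lean document; each statement's English description precedes it below -/
import Mathlib

section
/- Every formal power series f(t₁,…,t_r) over ℤ in r variables with constant term 1 admits a unique factorization f = ∏_{m ∈ ℤ_{≥0}^r \ {0}} (1 - t^m)^{s(m)} with integer exponents s(m), where t^m denotes t₁^{m₁}⋯t_r^{m_r}. -/
/-- The unit `1 - tᵐ` of `ℤ[[t₁,…]]` for a nonzero multi-index `m`; for `m = 0` we set it to `1`. -/
noncomputable def mvBinomUnit {σ : Type*} (m : σ →₀ ℕ) : (MvPowerSeries σ ℤ)ˣ := by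
  classical
  exact if h : IsUnit ((1 : MvPowerSeries σ ℤ) - MvPowerSeries.monomial m 1) then h.unit else 1

section Aux

variable {σ : Type*}

lemma mvBinomUnit_val {m : σ →₀ ℕ} (hm : m ≠ 0) :
    (mvBinomUnit m : MvPowerSeries σ ℤ) = 1 - MvPowerSeries.monomial m 1 := by
  classical
  have h : IsUnit ((1 : MvPowerSeries σ ℤ) - MvPowerSeries.monomial m 1) := by
    rw [MvPowerSeries.isUnit_iff_constantCoeff]
    have : (MvPowerSeries.constantCoeff) (MvPowerSeries.monomial m (1 : ℤ)) = 0 := by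
      rw [← MvPowerSeries.coeff_zero_eq_constantCoeff_apply, MvPowerSeries.coeff_monomial,
        if_neg (by exact fun h => hm h.symm)]
    rw [map_sub, map_one, this, sub_zero]; exact isUnit_one
  unfold mvBinomUnit
  rw [dif_pos h, IsUnit.unit_spec]

lemma zpow_val_map_one {R S : Type*} [CommRing R] [CommRing S] (φ : R →+* S) (u : Rˣ)
    (h : φ u = 1) (k : ℤ) : φ ((u ^ k : Rˣ) : R) = 1 := by
  have hu : Units.map φ.toMonoidHom u = 1 := Units.ext (by simpa using h)
  have : φ ((u ^ k : Rˣ) : R) = ((Units.map φ.toMonoidHom (u ^ k) : Sˣ) : S) := rfl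
  rw [this, map_zpow, hu, one_zpow, Units.val_one]

lemma mvBinomUnit_constCoeff_zpow {m : σ →₀ ℕ} (hm : m ≠ 0) (k : ℤ) :
    MvPowerSeries.constantCoeff
      ((mvBinomUnit m ^ k : (MvPowerSeries σ ℤ)ˣ) : MvPowerSeries σ ℤ) = 1 := by
  classical
  refine zpow_val_map_one _ _ ?_ k
  rw [mvBinomUnit_val hm, map_sub, map_one, ← MvPowerSeries.coeff_zero_eq_constantCoeff_apply,
    MvPowerSeries.coeff_monomial, if_neg (by exact fun h => hm h.symm), sub_zero]

lemma mvBinomUnit_zpow_sub_one_mem {m : σ →₀ ℕ} (hm : m ≠ 0) (k : ℤ) :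
    ((mvBinomUnit m ^ k : (MvPowerSeries σ ℤ)ˣ) : MvPowerSeries σ ℤ) - 1 ∈
      Ideal.span {(MvPowerSeries.monomial m 1 : MvPowerSeries σ ℤ)} := by
  set I := Ideal.span {(MvPowerSeries.monomial m 1 : MvPowerSeries σ ℤ)} with hI
  have h1 : (Ideal.Quotient.mk I)
      ((mvBinomUnit m : (MvPowerSeries σ ℤ)ˣ) : MvPowerSeries σ ℤ) = 1 := by
    rw [mvBinomUnit_val hm, map_sub, map_one,
      Ideal.Quotient.eq_zero_iff_mem.mpr (Ideal.mem_span_singleton_self _), sub_zero]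
  have h2 := zpow_val_map_one (Ideal.Quotient.mk I) (mvBinomUnit m) h1 k
  rw [← map_one (Ideal.Quotient.mk I)] at h2
  exact Ideal.Quotient.eq.mp h2

lemma mvBinomUnit_coeff_self_zpow {n : σ →₀ ℕ} (hn : n ≠ 0) (k : ℤ) :
    MvPowerSeries.coeff n
      ((mvBinomUnit n ^ k : (MvPowerSeries σ ℤ)ˣ) : MvPowerSeries σ ℤ) = -k := by
  classical
  have key : ∀ j : ℤ,
      MvPowerSeries.coeff n ((mvBinomUnit n ^ (j + 1) : (MvPowerSeries σ ℤ)ˣ) : MvPowerSeries σ ℤ)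
      = MvPowerSeries.coeff n
          ((mvBinomUnit n ^ j : (MvPowerSeries σ ℤ)ˣ) : MvPowerSeries σ ℤ) - 1 := by
    intro j
    rw [zpow_add_one, Units.val_mul, mvBinomUnit_val hn, mul_sub, mul_one, map_sub,
      MvPowerSeries.coeff_mul_monomial, if_pos le_rfl, tsub_self, mul_one,
      MvPowerSeries.coeff_zero_eq_constantCoeff_apply, mvBinomUnit_constCoeff_zpow hn j]
  induction k using Int.induction_on with
  | zero => simp [MvPowerSeries.coeff_one, hn]
  | succ i ih => rw [key i, ih]; ring
  | pred i ih =>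
      have h3 := key (-i - 1)
      rw [sub_add_cancel] at h3
      have h4 : MvPowerSeries.coeff n
            ((mvBinomUnit n ^ (-(i:ℤ) - 1) : (MvPowerSeries σ ℤ)ˣ) : MvPowerSeries σ ℤ)
          = MvPowerSeries.coeff n
              ((mvBinomUnit n ^ (-(i:ℤ)) : (MvPowerSeries σ ℤ)ˣ) : MvPowerSeries σ ℤ) + 1 := by
        rw [h3]; ring
      rw [h4, ih]; ring

lemma coeff_mul_mvBinomUnit_zpow {n : σ →₀ ℕ} (hn : n ≠ 0) (P : MvPowerSeries σ ℤ)
    (hP : MvPowerSeries.constantCoeff P = 1) (k : ℤ) :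
    MvPowerSeries.coeff n (P * ((mvBinomUnit n ^ k : (MvPowerSeries σ ℤ)ˣ) : MvPowerSeries σ ℤ))
      = MvPowerSeries.coeff n P - k := by
  classical
  obtain ⟨g, hg⟩ := Ideal.mem_span_singleton'.mp (mvBinomUnit_zpow_sub_one_mem hn k)
  have hval : ((mvBinomUnit n ^ k : (MvPowerSeries σ ℤ)ˣ) : MvPowerSeries σ ℤ)
      = 1 + g * MvPowerSeries.monomial n 1 := by rw [hg]; ring
  have hg0 : MvPowerSeries.constantCoeff g = -k := by
    have h1 := mvBinomUnit_coeff_self_zpow hn k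
    rw [hval, map_add, MvPowerSeries.coeff_one, if_neg hn, zero_add,
      MvPowerSeries.coeff_mul_monomial, if_pos le_rfl, tsub_self, mul_one,
      MvPowerSeries.coeff_zero_eq_constantCoeff_apply] at h1
    linarith
  have h2 : P * ((mvBinomUnit n ^ k : (MvPowerSeries σ ℤ)ˣ) : MvPowerSeries σ ℤ)
      = P + (P * g) * MvPowerSeries.monomial n 1 := by rw [hval]; ring
  rw [h2, map_add, MvPowerSeries.coeff_mul_monomial, if_pos le_rfl, tsub_self, mul_one,
    MvPowerSeries.coeff_zero_eq_constantCoeff_apply, map_mul, hP, hg0, one_mul]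
  ring

lemma constCoeff_prod_mvBinomUnit (T : Finset (σ →₀ ℕ)) (hT : ∀ m ∈ T, m ≠ 0)
    (s : (σ →₀ ℕ) → ℤ) :
    MvPowerSeries.constantCoeff
      ((∏ m ∈ T, mvBinomUnit m ^ s m : (MvPowerSeries σ ℤ)ˣ) : MvPowerSeries σ ℤ) = 1 := by
  rw [Units.coe_prod, map_prod]
  exact Finset.prod_eq_one fun m hm => mvBinomUnit_constCoeff_zpow (hT m hm) (s m)

lemma coeff_prod_Iic_split [DecidableEq σ] {n : σ →₀ ℕ} (hn : n ≠ 0) (s : (σ →₀ ℕ) → ℤ) :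
    MvPowerSeries.coeff n
        ((∏ m ∈ (Finset.Iic n).erase 0, mvBinomUnit m ^ s m :
          (MvPowerSeries σ ℤ)ˣ) : MvPowerSeries σ ℤ)
      = MvPowerSeries.coeff n
          ((∏ m ∈ ((Finset.Iic n).erase 0).erase n, mvBinomUnit m ^ s m :
            (MvPowerSeries σ ℤ)ˣ) : MvPowerSeries σ ℤ) - s n := by
  classical
  have hmem : n ∈ (Finset.Iic n).erase 0 :=
    Finset.mem_erase.mpr ⟨hn, Finset.mem_Iic.mpr le_rfl⟩
  conv_lhs => rw [← Finset.insert_erase hmem, Finset.prod_insert (Finset.notMem_erase n _),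
    Units.val_mul, mul_comm]
  exact coeff_mul_mvBinomUnit_zpow hn _
    (constCoeff_prod_mvBinomUnit _
      (fun m hm => (Finset.mem_erase.mp (Finset.mem_erase.mp hm).2).1) s)
    (s n)

end Aux

noncomputable def sAux (r : ℕ) (f : MvPowerSeries (Fin r) ℤ) : (Fin r →₀ ℕ) → ℤ :=
  (wellFounded_lt (α := Fin r →₀ ℕ)).fix fun n rec =>
    if h : n = 0 then 0
    else
      MvPowerSeries.coeff n
        ((∏ m ∈ (((Finset.Iic n).erase 0).erase n).attach,
            mvBinomUnit m.1 ^ rec m.1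
              ((Finset.mem_Iic.mp (Finset.mem_erase.mp (Finset.mem_erase.mp m.2).2).2).lt_of_ne
                (Finset.mem_erase.mp m.2).1) :
          (MvPowerSeries (Fin r) ℤ)ˣ) : MvPowerSeries (Fin r) ℤ)
        - MvPowerSeries.coeff n f

lemma sAux_eq (r : ℕ) (f : MvPowerSeries (Fin r) ℤ) (n : Fin r →₀ ℕ) :
    sAux r f n = if n = 0 then 0
    else
      MvPowerSeries.coeff n
        ((∏ m ∈ ((Finset.Iic n).erase 0).erase n, mvBinomUnit m ^ sAux r f m :
          (MvPowerSeries (Fin r) ℤ)ˣ) : MvPowerSeries (Fin r) ℤ)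
        - MvPowerSeries.coeff n f := by
  by_cases hn : n = 0
  · rw [if_pos hn, sAux, WellFounded.fix_eq]
    exact dif_pos hn
  · rw [if_neg hn]
    conv_lhs => rw [sAux, WellFounded.fix_eq]
    rw [dif_neg hn]
    rw [← Finset.prod_attach (((Finset.Iic n).erase 0).erase n)
      (fun m => mvBinomUnit m ^ sAux r f m)]
    exact congrArg (fun x => x - MvPowerSeries.coeff n f)
      (congrArg _ (congrArg _ (Finset.prod_congr rfl fun m _ => rfl)))


/-- Every `f ∈ ℤ[[t₁,…,t_r]]` with constant term `1` admits a unique factorization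
`f = ∏_{m ∈ ℤ_{≥0}^r \ {0}} (1 - tᵐ)^{s(m)}` with integer exponents `s(m)`; the infinite
product is interpreted coefficientwise: the coefficient at a multi-index `n` only involves
the factors with multi-index `0 ≠ m ≤ n`. -/
theorem unique_mv_binomial_factorization (r : ℕ) (f : MvPowerSeries (Fin r) ℤ)
    (hf : MvPowerSeries.constantCoeff f = 1) :
    ∃! s : (Fin r →₀ ℕ) → ℤ, s 0 = 0 ∧ ∀ n : Fin r →₀ ℕ,
      MvPowerSeries.coeff n f =
        MvPowerSeries.coeff n
          ((∏ m ∈ (Finset.Iic n).erase 0, mvBinomUnit m ^ s m :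
            (MvPowerSeries (Fin r) ℤ)ˣ) : MvPowerSeries (Fin r) ℤ) := by
  classical
  refine ⟨sAux r f, ⟨by rw [sAux_eq]; simp, ?_⟩, ?_⟩
  · intro n
    by_cases hn : n = 0
    · subst hn
      have he : (Finset.Iic (0 : Fin r →₀ ℕ)).erase 0 = ∅ := by
        ext m
        simp only [Finset.mem_erase, Finset.mem_Iic, Finset.notMem_empty, iff_false, not_and]
        intro hm hle
        exact hm (nonpos_iff_eq_zero.mp hle)
      rw [he, Finset.prod_empty, Units.val_one,
        MvPowerSeries.coeff_zero_eq_constantCoeff_apply,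
        MvPowerSeries.coeff_zero_eq_constantCoeff_apply, hf, map_one]
    · rw [coeff_prod_Iic_split hn, sAux_eq, if_neg hn]
      ring
  · intro s hs
    funext n
    induction n using WellFoundedLT.induction with
    | ind n ih =>
      by_cases hn : n = 0
      · subst hn
        rw [hs.1, sAux_eq]
        simp
      · have h1 := hs.2 n
        rw [coeff_prod_Iic_split hn] at h1
        have h2 : (∏ m ∈ ((Finset.Iic n).erase 0).erase n, mvBinomUnit m ^ s m)
            = ∏ m ∈ ((Finset.Iic n).erase 0).erase n, mvBinomUnit m ^ sAux r f m :=
          Finset.prod_congr rfl fun m hm => by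
            rw [ih m
              ((Finset.mem_Iic.mp (Finset.mem_erase.mp (Finset.mem_erase.mp hm).2).2).lt_of_ne
                (Finset.mem_erase.mp hm).1)]
        rw [h2] at h1
        rw [sAux_eq, if_neg hn]
        linarith
end

section
/- In ℤ[[t]], the identity ∏_{m≥1}(1-t^m)^{s(m)} = ∏_{m≥1}(1-t^m)^{s'(m)} with all but finitely many s(m), s'(m) zero implies s(m) = s'(m) for all m. -/
/-- The unit `1 - tᵐ` of `ℤ[[t]]` (for `m ≥ 1`); for `m = 0` we set it to `1`. -/
noncomputable def binomUnit (m : ℕ) : (PowerSeries ℤ)ˣ := by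
  classical
  exact if h : IsUnit ((1 : PowerSeries ℤ) - PowerSeries.X ^ m) then h.unit else 1

lemma binomUnit_isUnit (m : ℕ) (hm : 1 ≤ m) :
    IsUnit ((1 : PowerSeries ℤ) - PowerSeries.X ^ m) := by
  rw [PowerSeries.isUnit_iff_constantCoeff]
  simp [PowerSeries.constantCoeff_X, zero_pow (by omega : m ≠ 0)]

lemma binomUnit_coe (m : ℕ) (hm : 1 ≤ m) :
    (binomUnit m : PowerSeries ℤ) = 1 - PowerSeries.X ^ m := by
  rw [binomUnit, dif_pos (binomUnit_isUnit m hm)]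
  exact (binomUnit_isUnit m hm).unit_spec

lemma binomUnit_zpow_dvd (m : ℕ) (hm : 1 ≤ m) (k : ℤ) :
    (PowerSeries.X ^ (m + 1) : PowerSeries ℤ) ∣
      ((binomUnit m ^ k : (PowerSeries ℤ)ˣ) : PowerSeries ℤ) -
        (1 - PowerSeries.C k * PowerSeries.X ^ m) := by
  obtain ⟨D, hD⟩ : (PowerSeries.X ^ (m + 1) : PowerSeries ℤ) ∣ PowerSeries.X ^ (2 * m) :=
    pow_dvd_pow _ (by omega)
  induction k using Int.induction_on with
  | zero => simp
  | succ k ih =>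
    obtain ⟨B, hB⟩ := ih
    have hval : ((binomUnit m ^ ((k : ℤ) + 1) : (PowerSeries ℤ)ˣ) : PowerSeries ℤ) =
        ((binomUnit m ^ (k : ℤ) : (PowerSeries ℤ)ˣ) : PowerSeries ℤ) *
          (1 - PowerSeries.X ^ m) := by
      rw [zpow_add_one, Units.val_mul, binomUnit_coe m hm]
    rw [hval, sub_eq_iff_eq_add.mp hB]
    refine ⟨B * (1 - PowerSeries.X ^ m) + PowerSeries.C (k : ℤ) * D, ?_⟩
    rw [map_add, map_one]
    linear_combination (PowerSeries.C (k : ℤ)) * hD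
  | pred k ih =>
    obtain ⟨B, hB⟩ := ih
    have hB' := sub_eq_iff_eq_add.mp hB
    have hval : ((binomUnit m ^ (-(k : ℤ) - 1) : (PowerSeries ℤ)ˣ) : PowerSeries ℤ) *
          (1 - PowerSeries.X ^ m) =
        PowerSeries.X ^ (m + 1) * B +
          (1 - PowerSeries.C (-(k : ℤ)) * PowerSeries.X ^ m) := by
      rw [← hB', ← binomUnit_coe m hm, ← Units.val_mul, ← zpow_add_one]
      norm_num
    have key : (PowerSeries.X ^ (m + 1) : PowerSeries ℤ) ∣
        (((binomUnit m ^ (-(k : ℤ) - 1) : (PowerSeries ℤ)ˣ) : PowerSeries ℤ) -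
          (1 - PowerSeries.C (-(k : ℤ) - 1) * PowerSeries.X ^ m)) *
          (1 - PowerSeries.X ^ m) := by
      refine ⟨B + (PowerSeries.C (k : ℤ) + 1) * D, ?_⟩
      simp only [map_sub, map_neg, map_one] at hval ⊢
      linear_combination hval + (PowerSeries.C (k : ℤ) + 1) * hD
    exact ((binomUnit_isUnit m hm).dvd_mul_right
      (a := (PowerSeries.X ^ (m + 1) : PowerSeries ℤ))
      (b := ((binomUnit m ^ (-(k : ℤ) - 1) : (PowerSeries ℤ)ˣ) : PowerSeries ℤ) -
          (1 - PowerSeries.C (-(k : ℤ) - 1) * PowerSeries.X ^ m))).mp key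

lemma dvd_prod_sub_one {ι : Type*} {R : Type*} [CommRing R] (x : R) (F : Finset ι)
    (g : ι → R) (h : ∀ i ∈ F, x ∣ g i - 1) : x ∣ (∏ i ∈ F, g i) - 1 := by
  classical
  induction F using Finset.induction_on with
  | empty => simp
  | insert a F' hi ih =>
    rw [Finset.prod_insert hi]
    have h1 : x ∣ g a - 1 := h a (Finset.mem_insert_self a F')
    have h2 : x ∣ (∏ i ∈ F', g i) - 1 := ih fun i hif => h i (Finset.mem_insert_of_mem hif)
    have : g a * ∏ i ∈ F', g i - 1
        = g a * ((∏ i ∈ F', g i) - 1) + (g a - 1) := by ring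
    rw [this]
    exact dvd_add (h2.mul_left (g a)) h1

lemma binomUnit_zpow_sub_one_dvd (n m : ℕ) (hm : n + 1 ≤ m) (k : ℤ) :
    (PowerSeries.X ^ (n + 1) : PowerSeries ℤ) ∣
      ((binomUnit m ^ k : (PowerSeries ℤ)ˣ) : PowerSeries ℤ) - 1 := by
  have h1 := binomUnit_zpow_dvd m (by omega) k
  have h2 : (PowerSeries.X ^ (n + 1) : PowerSeries ℤ) ∣ PowerSeries.X ^ (m + 1) :=
    pow_dvd_pow _ (by omega)
  have h3 : (PowerSeries.X ^ (n + 1) : PowerSeries ℤ) ∣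
      PowerSeries.C k * PowerSeries.X ^ m :=
    Dvd.dvd.mul_left (pow_dvd_pow _ (by omega)) _
  have h5 := dvd_sub (h2.trans h1) h3
  have heq2 : (((binomUnit m ^ k : (PowerSeries ℤ)ˣ) : PowerSeries ℤ) -
          (1 - PowerSeries.C k * PowerSeries.X ^ m)) -
          PowerSeries.C k * PowerSeries.X ^ m
      = ((binomUnit m ^ k : (PowerSeries ℤ)ˣ) : PowerSeries ℤ) - 1 := by ring
  rwa [heq2] at h5

lemma binomUnit_kernel (d : ℕ →₀ ℤ) (hd0 : d 0 = 0)
    (hd : (d.prod fun m k => binomUnit m ^ k) = 1) : d = 0 := by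
  classical
  by_contra hne
  have hsupp : d.support.Nonempty := Finsupp.support_nonempty_iff.mpr hne
  set n := d.support.min' hsupp with hn
  have hnmem : n ∈ d.support := d.support.min'_mem hsupp
  have hdn : d n ≠ 0 := Finsupp.mem_support_iff.mp hnmem
  have hn1 : 1 ≤ n := by
    rcases Nat.eq_zero_or_pos n with h0 | h1
    · exact absurd (h0 ▸ hdn) (by simp [hd0])
    · exact h1
  -- coerce the unit equation to power series
  have hcoe : ((d.prod fun m k => binomUnit m ^ k : (PowerSeries ℤ)ˣ) : PowerSeries ℤ)
      = 1 := by rw [hd]; rfl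
  have hprod : ((d.prod fun m k => binomUnit m ^ k : (PowerSeries ℤ)ˣ) : PowerSeries ℤ)
      = ∏ m ∈ d.support, ((binomUnit m ^ d m : (PowerSeries ℤ)ˣ) : PowerSeries ℤ) := by
    rw [Finsupp.prod]
    exact map_prod (Units.coeHom (PowerSeries ℤ)) _ _
  have hsplit : (∏ m ∈ d.support, ((binomUnit m ^ d m : (PowerSeries ℤ)ˣ) : PowerSeries ℤ))
      = ((binomUnit n ^ d n : (PowerSeries ℤ)ˣ) : PowerSeries ℤ) *
        ∏ m ∈ d.support.erase n, ((binomUnit m ^ d m : (PowerSeries ℤ)ˣ) : PowerSeries ℤ) :=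
    (Finset.mul_prod_erase _ _ hnmem).symm
  have hrest : (PowerSeries.X ^ (n + 1) : PowerSeries ℤ) ∣
      (∏ m ∈ d.support.erase n, ((binomUnit m ^ d m : (PowerSeries ℤ)ˣ) : PowerSeries ℤ)) - 1 := by
    refine dvd_prod_sub_one _ _ _ fun m hmF => ?_
    have hmn : n + 1 ≤ m := by
      have h1 := d.support.min'_le m (Finset.mem_of_mem_erase hmF)
      have h2 := Finset.ne_of_mem_erase hmF
      omega
    exact binomUnit_zpow_sub_one_dvd n m hmn _
  have hhead := binomUnit_zpow_dvd n hn1 (d n)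
  -- X^(n+1) ∣ product - (1 - C (d n) X^n)
  have hkey : (PowerSeries.X ^ (n + 1) : PowerSeries ℤ) ∣
      ((d.prod fun m k => binomUnit m ^ k : (PowerSeries ℤ)ˣ) : PowerSeries ℤ) -
        (1 - PowerSeries.C (d n) * PowerSeries.X ^ n) := by
    rw [hprod, hsplit]
    set A := ((binomUnit n ^ d n : (PowerSeries ℤ)ˣ) : PowerSeries ℤ)
    set B := ∏ m ∈ d.support.erase n, ((binomUnit m ^ d m : (PowerSeries ℤ)ˣ) : PowerSeries ℤ)
    have : A * B - (1 - PowerSeries.C (d n) * PowerSeries.X ^ n)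
        = A * (B - 1) + (A - (1 - PowerSeries.C (d n) * PowerSeries.X ^ n)) := by ring
    rw [this]
    exact dvd_add (hrest.mul_left A) hhead
  rw [hcoe] at hkey
  have hfin : (PowerSeries.X ^ (n + 1) : PowerSeries ℤ) ∣
      PowerSeries.C (d n) * PowerSeries.X ^ n := by
    have : (1 : PowerSeries ℤ) - (1 - PowerSeries.C (d n) * PowerSeries.X ^ n)
        = PowerSeries.C (d n) * PowerSeries.X ^ n := by ring
    rwa [this] at hkey
  have h0 := (PowerSeries.X_pow_dvd_iff.mp hfin) n (Nat.lt_succ_self n)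
  rw [PowerSeries.coeff_C_mul, PowerSeries.coeff_X_pow, if_pos rfl, mul_one] at h0
  exact hdn h0

/-- If `∏_{m≥1}(1-tᵐ)^{s(m)} = ∏_{m≥1}(1-tᵐ)^{s'(m)}` in `ℤ[[t]]` with finitely supported
integer exponents (negative exponents being powers of the inverse of the unit `1 - tᵐ`),
then `s = s'`. -/
theorem binomial_factorization_exponents_unique (s s' : ℕ →₀ ℤ)
    (hs : s 0 = 0) (hs' : s' 0 = 0)
    (h : (s.prod fun m k => binomUnit m ^ k) = s'.prod fun m k => binomUnit m ^ k) :
    s = s' := by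
  have hd0 : (s - s') 0 = 0 := by simp [hs, hs']
  have hsum : s = (s - s') + s' := by abel
  have hprod : (s.prod fun m k => binomUnit m ^ k)
      = ((s - s').prod fun m k => binomUnit m ^ k) *
        (s'.prod fun m k => binomUnit m ^ k) := by
    conv_lhs => rw [hsum]
    exact Finsupp.prod_add_index' (fun a => zpow_zero _) (fun a b₁ b₂ => zpow_add _ _ _)
  rw [hprod] at h
  have h1 : ((s - s').prod fun m k => binomUnit m ^ k) = 1 := by
    have := mul_right_cancel (h.trans (one_mul _).symm)
    exact this
  have := binomUnit_kernel (s - s') hd0 h1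
  exact sub_eq_zero.mp this
end
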